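/- Let k⃗ ~ Multinomial(n, p⃗) over a finite set of outcomes. Then E[‖p⃗ − k⃗/n‖₁] = (2/n)·Σₓ s(x)·C(n, s(x))·p(x)^{s(x)}·(1 − p(x))^{n − s(x) + 1}, where s(x) = ⌈n·p(x)⌉. -/

import Mathlib

open MeasureTheory ProbabilityTheory Finset
open scoped NNReal ENNReal

section aux

lemma bin_mad' (n : ℕ) (p : ℝ) (hp0 : 0 ≤ p) (hp1 : p ≤ 1) :
    ∑ j ∈ range (n+1), |(n:ℝ) * p - j| * (n.choose j) * p^j * (1-p)^(n-j)
      = 2 * (⌈(n:ℝ)*p⌉₊ : ℝ) * (n.choose ⌈(n:ℝ)*p⌉₊) * p^(⌈(n:ℝ)*p⌉₊)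
        * (1-p)^(n - ⌈(n:ℝ)*p⌉₊ + 1) := by
  set s := ⌈(n:ℝ)*p⌉₊ with hs
  have hnp0 : 0 ≤ (n:ℝ) * p := by positivity
  have hsn : s ≤ n := by
    rw [hs]
    exact Nat.ceil_le.2 (by nlinarith)
  set g : ℕ → ℝ := fun j => j * (n.choose j) * p^j * (1-p)^(n+1-j) with hg
  have key : ∀ j ≤ n, ((j:ℝ) - n*p) * ((n.choose j) * p^j * (1-p)^(n-j)) = g j - g (j+1) := by
    intro j hj
    have hc : ((n.choose (j+1)):ℝ) * (j+1) = (n.choose j) * ((n:ℝ) - j) := by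
      have h := Nat.choose_succ_right_eq n j
      have h2 := congrArg (Nat.cast : ℕ → ℝ) h
      push_cast [Nat.cast_sub hj] at h2
      linarith
    have e1 : n + 1 - j = (n - j) + 1 := by omega
    have e2 : n + 1 - (j+1) = n - j := by omega
    simp only [hg, e1, e2]
    push_cast
    linear_combination (p^j * p * (1-p)^(n-j)) * hc
  have hg0 : g 0 = 0 := by simp [hg]
  have hgn1 : g (n+1) = 0 := by simp [hg, Nat.choose_succ_self]
  have hsum1 : ∑ j ∈ range s, ((n:ℝ)*p - j) * ((n.choose j) * p^j * (1-p)^(n-j)) = g s := by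
    rw [Finset.sum_congr rfl (fun j hj => ?_), Finset.sum_range_sub g s, hg0, sub_zero]
    have hj' : j ≤ n := le_trans (Nat.le_of_lt_succ (Nat.lt_succ_of_lt (mem_range.1 hj))) hsn
    linarith [key j hj']
  have hsum2 : ∑ j ∈ range (n+1), ((j:ℝ) - n*p) * ((n.choose j) * p^j * (1-p)^(n-j)) = 0 := by
    rw [Finset.sum_congr rfl (fun j hj => key j (Nat.lt_succ_iff.1 (mem_range.1 hj))),
      Finset.sum_range_sub' g (n+1), hg0, hgn1, sub_zero]
  have split : ∀ j ∈ range (n+1),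
      |(n:ℝ) * p - j| * (n.choose j) * p^j * (1-p)^(n-j)
        = ((j:ℝ) - n*p) * ((n.choose j) * p^j * (1-p)^(n-j))
          + (if j < s then 2*(((n:ℝ)*p - j) * ((n.choose j) * p^j * (1-p)^(n-j))) else 0) := by
    intro j _
    by_cases hjs : j < s
    · have hlt : (j:ℝ) < n*p := Nat.lt_ceil.1 (hs ▸ hjs)
      rw [if_pos hjs, abs_of_pos (by linarith)]
      ring
    · have hge : (n:ℝ)*p ≤ j := Nat.ceil_le.1 (hs ▸ not_lt.1 hjs)
      rw [if_neg hjs, abs_of_nonpos (by linarith)]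
      ring
  rw [Finset.sum_congr rfl split, Finset.sum_add_distrib, hsum2, zero_add,
    ← Finset.sum_filter]
  have hfil : (range (n+1)).filter (· < s) = range s := by
    ext j; simp only [mem_filter, mem_range]; omega
  rw [hfil, ← Finset.mul_sum, hsum1]
  have e3 : n + 1 - s = n - s + 1 := by omega
  simp only [hg, e3]
  ring


lemma marginal_general' {ι : Type*} [DecidableEq ι] (s : Finset ι) (x : ι) (hx : x ∉ s)
    (p : ι → ℝ) (n : ℕ) (u : ℕ → ℝ) :
    ∑ f ∈ piAntidiag (cons x s hx) n,
        u (f x) * (Nat.multinomial (cons x s hx) f : ℝ) * ∏ y ∈ cons x s hx, p y ^ f y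
      = ∑ j ∈ range (n+1),
          u j * (n.choose j) * p x ^ j * (∑ y ∈ s, p y) ^ (n - j) := by
  rw [piAntidiag_cons, sum_disjiUnion]
  rw [Finset.Nat.sum_antidiagonal_eq_sum_range_succ
    (fun a b => ∑ f ∈ (piAntidiag s b).map
      (addRightEmbedding fun t ↦ if t = x then a else 0),
        u (f x) * (Nat.multinomial (cons x s hx) f : ℝ) * ∏ y ∈ cons x s hx, p y ^ f y)]
  refine Finset.sum_congr rfl fun j hj => ?_
  rw [sum_map]
  have hjn : j ≤ n := Nat.lt_succ_iff.1 (mem_range.1 hj)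
  have step : ∀ g ∈ piAntidiag s (n - j),
      u ((addRightEmbedding fun t ↦ if t = x then j else 0) g x)
        * (Nat.multinomial (cons x s hx) ((addRightEmbedding fun t ↦ if t = x then j else 0) g) : ℝ)
        * ∏ y ∈ cons x s hx, p y ^ (((addRightEmbedding fun t ↦ if t = x then j else 0) g) y)
      = u j * (n.choose j) * p x ^ j * ((Nat.multinomial s g : ℝ) * ∏ y ∈ s, p y ^ g y) := by
    intro g hg
    rw [mem_piAntidiag] at hg
    have hgx : g x = 0 := by
      by_contra h
      exact hx (hg.2 x h)
    have happ : ∀ t, ((addRightEmbedding fun t ↦ if t = x then j else 0) g) t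
        = g t + if t = x then j else 0 := fun t => rfl
    have hfx : ((addRightEmbedding fun t ↦ if t = x then j else 0) g) x = j := by
      rw [happ, hgx, if_pos rfl, zero_add]
    have hfs : ∀ t ∈ s, ((addRightEmbedding fun t ↦ if t = x then j else 0) g) t = g t := by
      intro t ht
      rw [happ, if_neg (by rintro rfl; exact hx ht), add_zero]
    have hmult : Nat.multinomial (cons x s hx) ((addRightEmbedding fun t ↦ if t = x then j else 0) g)
        = n.choose j * Nat.multinomial s g := by
      rw [Nat.multinomial_cons, hfx, Nat.multinomial_congr hfs,
        Finset.sum_congr rfl hfs, hg.1, Nat.add_sub_cancel' hjn]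
    rw [hmult, prod_cons, hfx, Finset.prod_congr rfl (fun t ht => by rw [hfs t ht])]
    push_cast
    ring
  rw [Finset.sum_congr rfl step, ← Finset.mul_sum]
  rw [← Finset.sum_pow_eq_sum_piAntidiag]
  try ring


end aux

theorem multinomial_l1_deviation {ι : Type*} [Fintype ι] {Ω : Type*} [MeasurableSpace Ω]
    (P : Measure Ω) [IsProbabilityMeasure P]
    (n : ℕ) (hn : 0 < n) (p : ι → ℝ) (hp0 : ∀ x, 0 ≤ p x) (hp1 : ∑ x, p x = 1)
    (k : ι → Ω → ℕ) (hmeas : ∀ x, Measurable (k x))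
    (hmult : ∀ f : ι → ℕ, ∑ x, f x = n →
      (P {ω | ∀ x, k x ω = f x}).toReal
        = (Nat.multinomial Finset.univ f : ℝ) * ∏ x, p x ^ f x) :
    ∫ ω, ∑ x, |p x - (k x ω : ℝ) / n| ∂P
      = (2 / n) * ∑ x, (⌈(n : ℝ) * p x⌉₊ : ℝ) * (n.choose ⌈(n : ℝ) * p x⌉₊ : ℝ)
          * p x ^ (⌈(n : ℝ) * p x⌉₊) * (1 - p x) ^ (n - ⌈(n : ℝ) * p x⌉₊ + 1) := by
  classical
  have hple : ∀ x, p x ≤ 1 := fun x =>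
    hp1 ▸ Finset.single_le_sum (fun y _ => hp0 y) (mem_univ x)
  set F := piAntidiag (univ : Finset ι) n with hF
  set E : (ι → ℕ) → Set Ω := fun f => {ω | ∀ x, k x ω = f x} with hE
  set m : (ι → ℕ) → ℝ := fun f => (Nat.multinomial univ f : ℝ) * ∏ x, p x ^ f x with hm
  set w : (ι → ℕ) → ℝ := fun f => ∑ x, |p x - (f x : ℝ)/n| with hw
  have hEmeas : ∀ f, MeasurableSet (E f) := by
    intro f
    have : E f = ⋂ x, k x ⁻¹' {f x} := by
      ext ω; simp [hE, Set.mem_iInter]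
    rw [this]
    exact MeasurableSet.iInter fun x => (hmeas x) (measurableSet_singleton _)
  have hPE : ∀ f ∈ F, (P (E f)).toReal = m f := fun f hf =>
    hmult f ((mem_piAntidiag.1 hf).1)
  have hdisj : (F : Set (ι → ℕ)).PairwiseDisjoint E := by
    intro f _ f' _ hne
    refine Set.disjoint_left.2 fun ω hωf hωf' => hne (funext fun x => ?_)
    rw [← hωf x, ← hωf' x]
  have hsum_m : ∑ f ∈ F, m f = 1 := by
    have h := Finset.sum_pow_eq_sum_piAntidiag (univ : Finset ι) p n
    rw [hp1, one_pow] at h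
    exact h.symm
  have hU : P (⋃ f ∈ F, E f) = 1 := by
    have h1 : P (⋃ f ∈ F, E f) = ∑ f ∈ F, P (E f) :=
      measure_biUnion_finset hdisj (fun f _ => hEmeas f)
    have h2 : (P (⋃ f ∈ F, E f)).toReal = 1 := by
      rw [h1, ENNReal.toReal_sum (fun f _ => measure_ne_top P _)]
      rw [Finset.sum_congr rfl hPE, hsum_m]
    exact (ENNReal.toReal_eq_one_iff _).1 h2
  have hae : ∀ᵐ ω ∂P, ω ∈ ⋃ f ∈ F, E f := by
    have hms : MeasurableSet (⋃ f ∈ F, E f) :=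
      MeasurableSet.biUnion F.countable_toSet (fun f _ => hEmeas f)
    have h0 : P (⋃ f ∈ F, E f)ᶜ = 0 := by
      rw [measure_compl hms (measure_ne_top P _), measure_univ, hU, tsub_self]
    rw [MeasureTheory.ae_iff]
    exact h0
  have hcongr : (fun ω => ∑ x, |p x - (k x ω : ℝ)/n|)
      =ᵐ[P] (fun ω => ∑ f ∈ F, Set.indicator (E f) (fun _ => w f) ω) := by
    filter_upwards [hae] with ω hω
    obtain ⟨f, hfF, hωf⟩ := Set.mem_iUnion₂.1 hω
    have hωf' : ∀ x, k x ω = f x := hωf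
    have hL : ∑ x, |p x - (k x ω : ℝ)/n| = w f := by
      rw [hw]; exact Finset.sum_congr rfl fun x _ => by rw [hωf' x]
    have hzero : ∀ f' ∈ F, f' ≠ f → Set.indicator (E f') (fun _ => w f') ω = 0 := by
      intro f' _ hne
      refine Set.indicator_of_notMem ?_ _
      intro hωf''
      exact hne (funext fun x =>
        ((show ∀ x, k x ω = f' x from hωf'') x).symm.trans (hωf' x))
    rw [hL, Finset.sum_eq_single_of_mem f hfF hzero, Set.indicator_of_mem hωf]
  rw [integral_congr_ae hcongr]
  have hint : ∀ f ∈ F, Integrable (fun ω => Set.indicator (E f) (fun _ => w f) ω) P := by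
    intro f _
    exact (integrable_indicator_iff (hEmeas f)).2 (integrableOn_const (measure_ne_top P _))
  rw [integral_finset_sum F hint]
  have hval : ∀ f ∈ F, ∫ ω, Set.indicator (E f) (fun _ => w f) ω ∂P = w f * m f := by
    intro f hf
    rw [integral_indicator_const _ (hEmeas f), smul_eq_mul, measureReal_def, ← hPE f hf, mul_comm]
  rw [Finset.sum_congr rfl hval]
  -- combinatorial part
  have hswap : ∑ f ∈ F, w f * m f = ∑ x, ∑ f ∈ F, |p x - (f x : ℝ)/n| * m f := by
    rw [Finset.sum_comm]
    exact Finset.sum_congr rfl fun f _ => by rw [hw, Finset.sum_mul]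
  rw [hswap]
  have hper : ∀ x : ι, ∑ f ∈ F, |p x - (f x : ℝ)/n| * m f
      = (2/n) * ((⌈(n : ℝ) * p x⌉₊ : ℝ) * (n.choose ⌈(n : ℝ) * p x⌉₊ : ℝ)
          * p x ^ (⌈(n : ℝ) * p x⌉₊) * (1 - p x) ^ (n - ⌈(n : ℝ) * p x⌉₊ + 1)) := by
    intro x
    have hx : x ∉ univ.erase x := notMem_erase x univ
    have huniv : cons x (univ.erase x) hx = univ := by
      rw [cons_eq_insert]; exact insert_erase (mem_univ x)
    have hmg := marginal_general' (univ.erase x) x hx p n (fun j => |p x - (j : ℝ)/n|)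
    rw [huniv] at hmg
    have herase : ∑ y ∈ univ.erase x, p y = 1 - p x := by
      have := Finset.sum_erase_add univ p (mem_univ x)
      rw [hp1] at this; linarith
    rw [herase] at hmg
    have hL : ∑ f ∈ F, |p x - (f x : ℝ)/n| * m f
        = ∑ f ∈ F, |p x - (f x : ℝ)/n| * (Nat.multinomial univ f : ℝ) * ∏ y, p y ^ f y := by
      exact Finset.sum_congr rfl fun f _ => by rw [hm, mul_assoc]
    rw [hL, hF, hmg]
    have hnpos : (0:ℝ) < n := Nat.cast_pos.2 hn
    have habs : ∀ j : ℕ, |p x - (j : ℝ)/n| = |(n:ℝ) * p x - j| / n := by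
      intro j
      have e : p x - (j:ℝ)/n = ((n:ℝ) * p x - j)/n := by field_simp
      rw [e, abs_div, abs_of_pos hnpos]
    rw [Finset.sum_congr rfl fun j _ => by rw [habs j]]
    have e2 : ∑ j ∈ range (n+1),
        |(n:ℝ) * p x - j| / n * (n.choose j) * p x ^ j * (1 - p x) ^ (n - j)
        = (1/n) * ∑ j ∈ range (n+1),
            |(n:ℝ) * p x - j| * (n.choose j) * p x ^ j * (1 - p x) ^ (n - j) := by
      rw [Finset.mul_sum]
      exact Finset.sum_congr rfl fun j _ => by ring
    rw [e2, bin_mad' n (p x) (hp0 x) (hple x)]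
    ring
  rw [Finset.sum_congr rfl fun x _ => hper x, ← Finset.mul_sum]
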